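/- For a cube Q ⊂ ℝⁿ and h ∈ H¹(Q), one has |∫_Q ∇h| ≤ C ℓ(Q)^{(n−1)/2} (∫_Q |h|²)^{1/4} (∫_Q |∇h|²)^{1/4}, with C depending only on n. -/

import Mathlib

open MeasureTheory Set

lemma cs_int {α : Type*} [MeasurableSpace α] {μ : Measure α} {f g : α → ℝ}
    (hfm : AEStronglyMeasurable f μ) (hgm : AEStronglyMeasurable g μ)
    (hf0 : ∀ x, 0 ≤ f x) (hg0 : ∀ x, 0 ≤ g x)
    (hf2 : Integrable (fun x => f x ^ 2) μ) (hg2 : Integrable (fun x => g x ^ 2) μ) :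
    ∫ x, f x * g x ∂μ ≤ Real.sqrt (∫ x, f x ^ 2 ∂μ) * Real.sqrt (∫ x, g x ^ 2 ∂μ) := by
  have hpq : (2:ℝ).HolderConjugate 2 := Real.HolderConjugate.two_two
  have h2 : ENNReal.ofReal (2:ℝ) = 2 := by simp
  have hf : MemLp f (ENNReal.ofReal (2:ℝ)) μ := by
    rw [h2]; exact (memLp_two_iff_integrable_sq hfm).2 hf2
  have hg : MemLp g (ENNReal.ofReal (2:ℝ)) μ := by
    rw [h2]; exact (memLp_two_iff_integrable_sq hgm).2 hg2
  have := integral_mul_le_Lp_mul_Lq_of_nonneg hpq (Filter.Eventually.of_forall hf0)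
    (Filter.Eventually.of_forall hg0) hf hg
  simp only [show (2:ℝ) = ((2:ℕ):ℝ) by norm_num, Real.rpow_natCast] at this
  calc ∫ x, f x * g x ∂μ ≤ (∫ x, f x ^ 2 ∂μ) ^ (1/((2:ℕ):ℝ)) * (∫ x, g x ^ 2 ∂μ) ^ (1/((2:ℕ):ℝ)) :=
        this
    _ = Real.sqrt (∫ x, f x ^ 2 ∂μ) * Real.sqrt (∫ x, g x ^ 2 ∂μ) := by
        rw [Real.sqrt_eq_rpow, Real.sqrt_eq_rpow]; norm_num

/-- 1D interpolation bound. -/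
lemma oneD {g g' : ℝ → ℂ} (hd : ∀ t, HasDerivAt g (g' t) t) (hc : Continuous g')
    {a b : ℝ} (hab : a < b) :
    ‖g b - g a‖ ^ 2 ≤ 12 * Real.sqrt (∫ t in Icc a b, ‖g t‖ ^ 2) *
      Real.sqrt (∫ t in Icc a b, ‖g' t‖ ^ 2) := by
  have hgc : Continuous g := by
    rw [continuous_iff_continuousAt]; exact fun t => (hd t).continuousAt
  set l : ℝ := b - a with hldef
  have hl : 0 < l := sub_pos.2 hab
  set Y : ℝ := Real.sqrt (∫ t in Icc a b, ‖g t‖ ^ 2) with hYdef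
  set X : ℝ := Real.sqrt (∫ t in Icc a b, ‖g' t‖ ^ 2) with hXdef
  have hY0 : 0 ≤ Y := Real.sqrt_nonneg _
  have hX0 : 0 ≤ X := Real.sqrt_nonneg _
  have hmeasIcc : MeasurableSet (Icc a b) := measurableSet_Icc
  have hY2 : Y ^ 2 = ∫ t in Icc a b, ‖g t‖ ^ 2 :=
    Real.sq_sqrt (setIntegral_nonneg hmeasIcc fun t _ => by positivity)
  have hX2 : X ^ 2 = ∫ t in Icc a b, ‖g' t‖ ^ 2 :=
    Real.sq_sqrt (setIntegral_nonneg hmeasIcc fun t _ => by positivity)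
  have hg2int : Integrable (fun t => ‖g t‖ ^ 2) (volume.restrict (Icc a b)) :=
    ((hgc.norm.pow 2).integrableOn_Icc (a := a) (b := b))
  have hg'2int : Integrable (fun t => ‖g' t‖ ^ 2) (volume.restrict (Icc a b)) :=
    ((hc.norm.pow 2).integrableOn_Icc (a := a) (b := b))
  have hone : Integrable (fun _ : ℝ => (1:ℝ) ^ 2) (volume.restrict (Icc a b)) :=
    (integrable_const _)
  have hvol : ∫ t in Icc a b, (1:ℝ) ^ 2 = l := by
    simp [Real.volume_Icc, ENNReal.toReal_ofReal hl.le]; exact max_eq_left hl.le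
  -- bound 1
  have hbd1 : ‖g b - g a‖ ≤ Real.sqrt l * X := by
    have hftc : ∫ t in a..b, g' t = g b - g a :=
      intervalIntegral.integral_eq_sub_of_hasDerivAt (fun t _ => hd t)
        (hc.intervalIntegrable a b)
    rw [← hftc]
    calc ‖∫ t in a..b, g' t‖ ≤ ∫ t in a..b, ‖g' t‖ :=
          intervalIntegral.norm_integral_le_integral_norm hab.le
      _ = ∫ t in Icc a b, ‖g' t‖ := by
          rw [intervalIntegral.integral_of_le hab.le, integral_Icc_eq_integral_Ioc]
      _ = ∫ t in Icc a b, (1:ℝ) * ‖g' t‖ := by simp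
      _ ≤ Real.sqrt (∫ t in Icc a b, (1:ℝ) ^ 2) * X :=
          cs_int aestronglyMeasurable_const (hc.norm.aestronglyMeasurable).restrict
            (fun _ => zero_le_one) (fun _ => norm_nonneg _) hone hg'2int
      _ = Real.sqrt l * X := by rw [hvol]
  -- derivative of ‖g‖²
  set φ : ℝ → ℝ := fun t => ‖g t‖ ^ 2 with hφdef
  set ψ : ℝ → ℝ := fun t => 2 * (inner ℝ (g t) (g' t) : ℝ) with hψdef
  have hdφ : ∀ t, HasDerivAt φ (ψ t) t := fun t => (hd t).norm_sq
  have hψc : Continuous ψ := continuous_const.mul (hgc.inner hc)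
  have hψle : ∀ t, |ψ t| ≤ 2 * (‖g t‖ * ‖g' t‖) := by
    intro t
    rw [hψdef, abs_mul, abs_two]
    exact mul_le_mul_of_nonneg_left (abs_real_inner_le_norm _ _) (by norm_num)
  set K : ℝ := ∫ t in Icc a b, 2 * (‖g t‖ * ‖g' t‖) with hKdef
  have hKprodint : Integrable (fun t => 2 * (‖g t‖ * ‖g' t‖)) (volume.restrict (Icc a b)) :=
    (continuous_const.mul (hgc.norm.mul hc.norm)).integrableOn_Icc (a := a) (b := b)
  have hKle : K ≤ 2 * (Y * X) := by
    rw [hKdef, integral_const_mul]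
    refine mul_le_mul_of_nonneg_left ?_ (by norm_num)
    exact cs_int (hgc.norm.aestronglyMeasurable).restrict (hc.norm.aestronglyMeasurable).restrict
      (fun _ => norm_nonneg _) (fun _ => norm_nonneg _) hg2int hg'2int
  have hK0 : 0 ≤ K :=
    setIntegral_nonneg hmeasIcc fun t _ => by positivity
  -- trace bound
  have trace : ∀ c ∈ Icc a b, l * φ c ≤ Y ^ 2 + l * K := by
    intro c hcm
    have hpt : ∀ s ∈ Icc a b, φ c ≤ φ s + K := by
      intro s hs
      have hftc : ∫ t in s..c, ψ t = φ c - φ s :=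
        intervalIntegral.integral_eq_sub_of_hasDerivAt (fun t _ => hdφ t)
          (hψc.intervalIntegrable s c)
      have habs : |∫ t in s..c, ψ t| ≤ K := by
        calc |∫ t in s..c, ψ t| ≤ ∫ t in Set.uIoc s c, |ψ t| := by
              simpa [Real.norm_eq_abs] using
                intervalIntegral.norm_integral_le_integral_norm_uIoc (f := ψ) (a := s) (b := c)
                  (μ := volume)
          _ ≤ ∫ t in Icc a b, |ψ t| := by
              refine setIntegral_mono_set (hψc.abs.integrableOn_Icc (a := a) (b := b))
                (Filter.Eventually.of_forall fun t => abs_nonneg _)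
                (HasSubset.Subset.eventuallyLE ?_)
              refine Set.Ioc_subset_Icc_self.trans (Set.Icc_subset_Icc ?_ ?_)
              · exact le_min hs.1 hcm.1
              · exact max_le hs.2 hcm.2
          _ ≤ K := by
              refine setIntegral_mono_on (hψc.abs.integrableOn_Icc (a := a) (b := b))
                hKprodint hmeasIcc fun t _ => hψle t
      have : φ c - φ s ≤ K := hftc ▸ (le_abs_self _).trans habs
      linarith
    have hconst : ∀ r : ℝ, ∫ _ in Icc a b, r = l * r := by
      intro r
      rw [setIntegral_const]
      simp [Real.volume_Icc, ENNReal.toReal_ofReal hl.le, ← hldef]; exact Or.inl hl.le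
    have hint := setIntegral_mono_on (f := fun _ => φ c) (g := fun s => φ s + K)
      (integrable_const (φ c)) (hg2int.add (integrable_const K)) hmeasIcc hpt
    have hsum : ∫ s in Icc a b, (φ s + K) = (∫ s in Icc a b, φ s) + l * K := by
      rw [integral_add hg2int (integrable_const _), hconst]
    rw [hconst (φ c), hsum] at hint
    calc l * φ c ≤ (∫ s in Icc a b, φ s) + l * K := hint
      _ = Y ^ 2 + l * K := by rw [hY2]
  -- combine
  have hφb := trace b ⟨hab.le, le_refl b⟩
  have hφa := trace a ⟨le_refl a, hab.le⟩
  have hA2a : ‖g b - g a‖ ^ 2 ≤ 2 * φ b + 2 * φ a := by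
    have h1 : ‖g b - g a‖ ≤ ‖g b‖ + ‖g a‖ := norm_sub_le _ _
    have h2 : (0:ℝ) ≤ ‖g b - g a‖ := norm_nonneg _
    have e1 : φ b = ‖g b‖ ^ 2 := rfl
    have e2 : φ a = ‖g a‖ ^ 2 := rfl
    have := sq_nonneg (‖g b‖ - ‖g a‖)
    nlinarith [norm_nonneg (g b), norm_nonneg (g a)]
  have hA2b : ‖g b - g a‖ ^ 2 ≤ l * X ^ 2 := by
    have := hbd1
    nlinarith [Real.sq_sqrt hl.le, Real.sqrt_nonneg l, norm_nonneg (g b - g a)]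
  rcases le_total Y (l * X) with hcase | hcase
  · -- Y ≤ lX : use the trace bound
    have hYsq : Y ^ 2 ≤ l * (Y * X) := by nlinarith
    have hKle' : l * K ≤ l * (2 * (Y * X)) := mul_le_mul_of_nonneg_left hKle hl.le
    have hb' : l * φ b ≤ l * (Y * X) + l * (2 * (Y * X)) := by linarith
    have ha' : l * φ a ≤ l * (Y * X) + l * (2 * (Y * X)) := by linarith
    have hφb' : φ b ≤ 3 * (Y * X) := by
      have := le_of_mul_le_mul_left (by linarith : l * φ b ≤ l * (3 * (Y * X))) hl
      linarith
    have hφa' : φ a ≤ 3 * (Y * X) := by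
      have := le_of_mul_le_mul_left (by linarith : l * φ a ≤ l * (3 * (Y * X))) hl
      linarith
    calc ‖g b - g a‖ ^ 2 ≤ 2 * φ b + 2 * φ a := hA2a
      _ ≤ 12 * (Y * X) := by linarith
      _ = 12 * Y * X := by ring
  · -- lX ≤ Y
    calc ‖g b - g a‖ ^ 2 ≤ l * X ^ 2 := hA2b
      _ = (l * X) * X := by ring
      _ ≤ Y * X := mul_le_mul_of_nonneg_right hcase hX0
      _ ≤ 12 * Y * X := by nlinarith

/-- The axis-parallel closed cube in `ℝⁿ` with lower-left corner `a` and sidelength `l`. -/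
def cube (n : ℕ) (a : Fin n → ℝ) (l : ℝ) : Set (Fin n → ℝ) :=
  {x | ∀ i, a i ≤ x i ∧ x i ≤ a i + l}

lemma cube_eq_pi (k : ℕ) (a : Fin k → ℝ) (l : ℝ) :
    cube k a l = Set.pi univ fun j => Icc (a j) (a j + l) := by
  ext x; simp [cube, Set.mem_pi, mem_Icc, forall_and, Pi.le_def]

lemma cube_isCompact (k : ℕ) (a : Fin k → ℝ) (l : ℝ) : IsCompact (cube k a l) := by
  rw [cube_eq_pi]; exact isCompact_univ_pi fun j => isCompact_Icc

lemma cube_measurableSet (k : ℕ) (a : Fin k → ℝ) (l : ℝ) : MeasurableSet (cube k a l) := by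
  rw [cube_eq_pi]; exact MeasurableSet.univ_pi fun j => measurableSet_Icc

lemma cube_volume (k : ℕ) (a : Fin k → ℝ) {l : ℝ} (hl : 0 < l) :
    volume (cube k a l) = ENNReal.ofReal l ^ k := by
  rw [cube_eq_pi, volume_pi_pi]
  simp [Real.volume_Icc]

lemma transfer {E : Type*} [NormedAddCommGroup E] [NormedSpace ℝ E]
    (m : ℕ) (a : Fin (m+1) → ℝ) (l : ℝ) (i : Fin (m+1))
    (F : (Fin (m+1) → ℝ) → E) (hF : Continuous F) :
    ∫ x in cube (m+1) a l, F x
      = ∫ y in cube m (fun j => a (i.succAbove j)) l,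
          ∫ t in Icc (a i) (a i + l), F (i.insertNth t y) := by
  set I : Set ℝ := Icc (a i) (a i + l) with hI
  set Q' : Set (Fin m → ℝ) := cube m (fun j => a (i.succAbove j)) l with hQ'
  set e := MeasurableEquiv.piFinSuccAbove (fun _ : Fin (m+1) => ℝ) i with he
  have happ : ∀ x, e x = (x i, fun j => x (i.succAbove j)) := fun x => rfl
  have hsymm : ∀ p : ℝ × (Fin m → ℝ), e.symm p = i.insertNth p.1 p.2 := fun p => rfl
  have hpre : e ⁻¹' (I ×ˢ Q') = cube (m+1) a l := by
    ext x
    simp only [mem_preimage, happ, prodMk_mem_set_prod_eq, hI, hQ', mem_Icc, cube,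
      mem_setOf_eq]
    constructor
    · rintro ⟨h1, h2⟩ j
      refine Fin.succAboveCases i ?_ ?_ j
      · exact h1
      · exact fun k => h2 k
    · intro hx
      exact ⟨hx i, fun k => hx (i.succAbove k)⟩
  have hGc : Continuous fun p : ℝ × (Fin m → ℝ) => F (i.insertNth p.1 p.2) :=
    hF.comp (Continuous.finInsertNth (A := fun _ : Fin (m+1) => ℝ) i continuous_fst continuous_snd)
  have hcomp : IsCompact (I ×ˢ Q') := isCompact_Icc.prod (cube_isCompact _ _ _)
  have hGint : IntegrableOn (fun p : ℝ × (Fin m → ℝ) => F (i.insertNth p.1 p.2)) (I ×ˢ Q')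
      volume := hGc.continuousOn.integrableOn_compact hcomp
  have hmp := (volume_preserving_piFinSuccAbove (fun _ : Fin (m+1) => ℝ) i)
  calc ∫ x in cube (m+1) a l, F x
      = ∫ x in e ⁻¹' (I ×ˢ Q'), F (e.symm (e x)) := by
        rw [hpre]; exact setIntegral_congr_fun (cube_measurableSet _ _ _)
          (fun x _ => by rw [e.symm_apply_apply])
    _ = ∫ p in I ×ˢ Q', F (e.symm p) := by
        rw [he]
        exact hmp.setIntegral_preimage_emb (MeasurableEquiv.measurableEmbedding _)
          (fun p => F (e.symm p)) (I ×ˢ Q')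
    _ = ∫ p in I ×ˢ Q', F (i.insertNth p.1 p.2) := by
        simp only [hsymm]
    _ = ∫ y in Q', ∫ t in I, F (i.insertNth t y) := by
        rw [Measure.volume_eq_prod, ← Measure.prod_restrict]
        rw [Measure.volume_eq_prod] at hGint
        refine integral_prod_symm _ ?_
        rwa [Measure.prod_restrict, ← IntegrableOn]

set_option maxHeartbeats 2000000 in
lemma key (m : ℕ) (a : Fin (m+1) → ℝ) {l : ℝ} (hl : 0 < l)
    (h : (Fin (m+1) → ℝ) → ℂ) (hh : ContDiff ℝ 1 h) (i : Fin (m+1)) :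
    ‖∫ x in cube (m+1) a l, fderiv ℝ h x (Pi.single i 1)‖ ^ 2 ≤
      12 * l ^ m * Real.sqrt (∫ x in cube (m+1) a l, ‖h x‖ ^ 2) *
        Real.sqrt (∫ x in cube (m+1) a l, ‖fderiv ℝ h x (Pi.single i 1)‖ ^ 2) := by
  set F : (Fin (m+1) → ℝ) → ℂ := fun x => fderiv ℝ h x (Pi.single i 1) with hFdef
  have hFc : Continuous F := by
    have h1 : Continuous fun p : (Fin (m+1) → ℝ) × (Fin (m+1) → ℝ) => fderiv ℝ h p.1 p.2 :=
      hh.continuous_fderiv_apply one_ne_zero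
    exact h1.comp (continuous_id.prodMk continuous_const)
  have hhc : Continuous h := hh.continuous
  set I : Set ℝ := Icc (a i) (a i + l) with hIdef
  set a' : Fin m → ℝ := fun j => a (i.succAbove j) with ha'
  set Q' : Set (Fin m → ℝ) := cube m a' l with hQ'def
  have hQ'm : MeasurableSet Q' := cube_measurableSet _ _ _
  have hQ'c : IsCompact Q' := cube_isCompact _ _ _
  have hImeas : MeasurableSet I := measurableSet_Icc
  -- the inner segment map and its derivative
  have hins : ∀ (y : Fin m → ℝ) (t : ℝ),
      HasDerivAt (fun s : ℝ => (i.insertNth s y : Fin (m+1) → ℝ)) (Pi.single i 1) t := by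
    intro y t
    set v : Fin (m+1) → ℝ := Pi.single i 1 with hv
    set c : Fin (m+1) → ℝ := i.insertNth 0 y with hcdef
    have haff : ∀ s : ℝ, (i.insertNth s y : Fin (m+1) → ℝ) = c + s • v := by
      intro s; ext j
      refine Fin.succAboveCases i ?_ ?_ j
      · simp [hv, hcdef]
      · intro k
        simp [hv, hcdef, Pi.single_eq_of_ne (i.succAbove_ne k)]
    have h1 : HasDerivAt (fun s : ℝ => c + s • v) v t := by
      simpa using ((hasDerivAt_id t).smul_const v).const_add c
    exact h1.congr_of_eventuallyEq (Filter.Eventually.of_forall fun s => haff s)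
  have hder : ∀ (y : Fin m → ℝ) (t : ℝ),
      HasDerivAt (fun s => h (i.insertNth s y)) (F (i.insertNth t y)) t := fun y t =>
    (((hh.differentiable one_ne_zero) _).hasFDerivAt).comp_hasDerivAt t (hins y t)
  have hinscont : ∀ y : Fin m → ℝ, Continuous fun t : ℝ => (i.insertNth t y : Fin (m+1) → ℝ) := fun y =>
    Continuous.finInsertNth (A := fun _ : Fin (m+1) => ℝ) i continuous_id continuous_const
  have hdcont : ∀ y : Fin m → ℝ, Continuous fun t => F (i.insertNth t y) := fun y =>
    hFc.comp (hinscont y)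
  -- slice quantities
  set Yf : (Fin m → ℝ) → ℝ := fun y => Real.sqrt (∫ t in I, ‖h (i.insertNth t y)‖ ^ 2) with hYf
  set Xf : (Fin m → ℝ) → ℝ := fun y => Real.sqrt (∫ t in I, ‖F (i.insertNth t y)‖ ^ 2) with hXf
  set d : (Fin m → ℝ) → ℂ :=
    fun y => h (i.insertNth (a i + l) y) - h (i.insertNth (a i) y) with hd
  have hone : ∀ y, ‖d y‖ ^ 2 ≤ 12 * Yf y * Xf y := fun y =>
    oneD (g := fun s => h (i.insertNth s y)) (g' := fun t => F (i.insertNth t y))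
      (hder y) (hdcont y) (by linarith : a i < a i + l)
  -- the fundamental identity
  have hident : ∫ x in cube (m+1) a l, F x = ∫ y in Q', d y := by
    rw [transfer m a l i F hFc]
    refine setIntegral_congr_fun hQ'm fun y _ => ?_
    have hftc := intervalIntegral.integral_eq_sub_of_hasDerivAt
      (f := fun s => h (i.insertNth s y)) (f' := fun t => F (i.insertNth t y))
      (a := a i) (b := a i + l) (fun t _ => hder y t)
      ((hdcont y).intervalIntegrable (a i) (a i + l))
    rw [integral_Icc_eq_integral_Ioc,
      ← intervalIntegral.integral_of_le (by linarith : a i ≤ a i + l), hftc]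
  -- Fubini transfers
  have hYsq : ∀ y, Yf y ^ 2 = ∫ t in I, ‖h (i.insertNth t y)‖ ^ 2 := fun y =>
    Real.sq_sqrt (setIntegral_nonneg hImeas fun t _ => by positivity)
  have hXsq : ∀ y, Xf y ^ 2 = ∫ t in I, ‖F (i.insertNth t y)‖ ^ 2 := fun y =>
    Real.sq_sqrt (setIntegral_nonneg hImeas fun t _ => by positivity)
  have hPfub : ∫ y in Q', Yf y ^ 2 = ∫ x in cube (m+1) a l, ‖h x‖ ^ 2 := by
    rw [transfer m a l i (fun x => ‖h x‖ ^ 2) (hhc.norm.pow 2)]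
    exact setIntegral_congr_fun hQ'm fun y _ => hYsq y
  have hGfub : ∫ y in Q', Xf y ^ 2 = ∫ x in cube (m+1) a l, ‖F x‖ ^ 2 := by
    rw [transfer m a l i (fun x => ‖F x‖ ^ 2) (hFc.norm.pow 2)]
    exact setIntegral_congr_fun hQ'm fun y _ => hXsq y
  -- integrability of the slice integrals
  have hprodint : ∀ G : (Fin (m+1) → ℝ) → ℝ, Continuous G →
      IntegrableOn (fun y => ∫ t in I, G (i.insertNth t y)) Q' volume := by
    intro G hGc
    have hcomp : IsCompact (I ×ˢ Q') := isCompact_Icc.prod hQ'c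
    have hint : IntegrableOn (fun p : ℝ × (Fin m → ℝ) => G (i.insertNth p.1 p.2)) (I ×ˢ Q')
        volume :=
      (hGc.comp (Continuous.finInsertNth (A := fun _ : Fin (m+1) => ℝ) i continuous_fst
        continuous_snd)).continuousOn.integrableOn_compact hcomp
    rw [IntegrableOn, Measure.volume_eq_prod, ← Measure.prod_restrict] at hint
    exact hint.integral_prod_right
  have hY2int : IntegrableOn (fun y => Yf y ^ 2) Q' volume := by
    have := hprodint (fun x => ‖h x‖ ^ 2) (hhc.norm.pow 2)
    simp_rw [hYsq]; exact this
  have hX2int : IntegrableOn (fun y => Xf y ^ 2) Q' volume := by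
    have := hprodint (fun x => ‖F x‖ ^ 2) (hFc.norm.pow 2)
    simp_rw [hXsq]; exact this
  have hYm : AEStronglyMeasurable Yf (volume.restrict Q') := by
    have := (hprodint (fun x => ‖h x‖ ^ 2) (hhc.norm.pow 2)).aestronglyMeasurable
    exact Real.continuous_sqrt.comp_aestronglyMeasurable this
  have hXm : AEStronglyMeasurable Xf (volume.restrict Q') := by
    have := (hprodint (fun x => ‖F x‖ ^ 2) (hFc.norm.pow 2)).aestronglyMeasurable
    exact Real.continuous_sqrt.comp_aestronglyMeasurable this
  have hYf0 : ∀ y, 0 ≤ Yf y := fun y => Real.sqrt_nonneg _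
  have hXf0 : ∀ y, 0 ≤ Xf y := fun y => Real.sqrt_nonneg _
  -- continuity of d
  have hdc : Continuous d := by
    refine Continuous.sub ?_ ?_
    · exact hhc.comp (Continuous.finInsertNth (A := fun _ : Fin (m+1) => ℝ) i
        continuous_const continuous_id)
    · exact hhc.comp (Continuous.finInsertNth (A := fun _ : Fin (m+1) => ℝ) i
        continuous_const continuous_id)
  -- volume of Q'
  have hvolQ' : ∫ _ in Q', (1:ℝ) ^ 2 = l ^ m := by
    rw [one_pow, setIntegral_const, measureReal_def, cube_volume m a' hl, smul_eq_mul, mul_one,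
      ENNReal.toReal_pow, ENNReal.toReal_ofReal hl.le]
  haveI hfinQ' : IsFiniteMeasure (volume.restrict Q') := by
    constructor
    rw [Measure.restrict_apply_univ, hQ'def, cube_volume m a' hl]
    exact ENNReal.pow_lt_top ENNReal.ofReal_lt_top
  -- main chain
  have s1 : ‖∫ x in cube (m+1) a l, F x‖ ≤ ∫ y in Q', ‖d y‖ := by
    rw [hident]; exact norm_integral_le_integral_norm _
  have s2 : ∫ y in Q', ‖d y‖ ≤ Real.sqrt (l ^ m) * Real.sqrt (∫ y in Q', ‖d y‖ ^ 2) := by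
    have hcs := cs_int (μ := volume.restrict Q') (f := fun _ => (1:ℝ)) (g := fun y => ‖d y‖)
      aestronglyMeasurable_const (hdc.norm.aestronglyMeasurable).restrict
      (fun _ => zero_le_one) (fun _ => norm_nonneg _)
      (integrable_const _) ((hdc.norm.pow 2).continuousOn.integrableOn_compact hQ'c)
    simp only [one_mul] at hcs
    rw [hvolQ'] at hcs
    exact hcs
  have hd2int : IntegrableOn (fun y => ‖d y‖ ^ 2) Q' volume :=
    (hdc.norm.pow 2).continuousOn.integrableOn_compact hQ'c
  have h12int : IntegrableOn (fun y => 12 * Yf y * Xf y) Q' volume := by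
    refine Integrable.mono' ((hY2int.add hX2int).const_mul 6)
      ((aestronglyMeasurable_const.mul hYm).mul hXm) ?_
    refine Filter.Eventually.of_forall fun y => ?_
    rw [Real.norm_eq_abs, abs_of_nonneg (by positivity), mul_assoc]
    have : Yf y * Xf y ≤ (Yf y ^ 2 + Xf y ^ 2) / 2 := by nlinarith [sq_nonneg (Yf y - Xf y)]
    calc 12 * (Yf y * Xf y) ≤ 12 * ((Yf y ^ 2 + Xf y ^ 2) / 2) := by linarith
      _ = 6 * (Yf y ^ 2 + Xf y ^ 2) := by ring
  have s3 : ∫ y in Q', ‖d y‖ ^ 2 ≤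
      12 * (Real.sqrt (∫ x in cube (m+1) a l, ‖h x‖ ^ 2) *
        Real.sqrt (∫ x in cube (m+1) a l, ‖F x‖ ^ 2)) := by
    calc ∫ y in Q', ‖d y‖ ^ 2 ≤ ∫ y in Q', 12 * Yf y * Xf y :=
          setIntegral_mono_on hd2int h12int hQ'm fun y _ => hone y
      _ = 12 * ∫ y in Q', Yf y * Xf y := by
          simp_rw [mul_assoc]; rw [integral_const_mul]
      _ ≤ 12 * (Real.sqrt (∫ y in Q', Yf y ^ 2) * Real.sqrt (∫ y in Q', Xf y ^ 2)) := by
          refine mul_le_mul_of_nonneg_left ?_ (by norm_num)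
          exact cs_int hYm hXm hYf0 hXf0 hY2int hX2int
      _ = 12 * (Real.sqrt (∫ x in cube (m+1) a l, ‖h x‖ ^ 2) *
            Real.sqrt (∫ x in cube (m+1) a l, ‖F x‖ ^ 2)) := by rw [hPfub, hGfub]
  -- conclude
  have hA0 : (0:ℝ) ≤ ‖∫ x in cube (m+1) a l, F x‖ := norm_nonneg _
  have hAB := s1.trans s2
  have hd2nonneg : 0 ≤ ∫ y in Q', ‖d y‖ ^ 2 :=
    setIntegral_nonneg hQ'm fun y _ => by positivity
  have hsq : ‖∫ x in cube (m+1) a l, F x‖ ^ 2 ≤ l ^ m * ∫ y in Q', ‖d y‖ ^ 2 := by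
    have hB0 : 0 ≤ Real.sqrt (l ^ m) * Real.sqrt (∫ y in Q', ‖d y‖ ^ 2) := by positivity
    calc ‖∫ x in cube (m+1) a l, F x‖ ^ 2
        ≤ (Real.sqrt (l ^ m) * Real.sqrt (∫ y in Q', ‖d y‖ ^ 2)) ^ 2 := by
          exact pow_le_pow_left₀ hA0 hAB 2
      _ = l ^ m * ∫ y in Q', ‖d y‖ ^ 2 := by
          rw [mul_pow, Real.sq_sqrt (by positivity), Real.sq_sqrt hd2nonneg]
  calc ‖∫ x in cube (m+1) a l, F x‖ ^ 2 ≤ l ^ m * ∫ y in Q', ‖d y‖ ^ 2 := hsq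
    _ ≤ l ^ m * (12 * (Real.sqrt (∫ x in cube (m+1) a l, ‖h x‖ ^ 2) *
          Real.sqrt (∫ x in cube (m+1) a l, ‖F x‖ ^ 2))) :=
        mul_le_mul_of_nonneg_left s3 (by positivity)
    _ = 12 * l ^ m * Real.sqrt (∫ x in cube (m+1) a l, ‖h x‖ ^ 2) *
          Real.sqrt (∫ x in cube (m+1) a l, ‖F x‖ ^ 2) := by ring

set_option maxHeartbeats 2000000 in
/-- For a cube `Q ⊂ ℝⁿ` and `h ∈ H¹(Q)`:
`|∫_Q ∇h| ≤ C ℓ(Q)^{(n−1)/2} (∫_Q |h|²)^{1/4} (∫_Q |∇h|²)^{1/4}`, `C = C(n)`. -/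
theorem gradient_average_interpolation (n : ℕ) (hn : 1 ≤ n) :
    ∃ C : ℝ, 0 < C ∧
      ∀ (a : Fin n → ℝ) (l : ℝ), 0 < l →
        ∀ h : (Fin n → ℝ) → ℂ, ContDiff ℝ 1 h →
          Real.sqrt (∑ i, ‖∫ x in cube n a l, fderiv ℝ h x (Pi.single i 1)‖ ^ 2) ≤
            C * l ^ (((n : ℝ) - 1) / 2) *
              (∫ x in cube n a l, ‖h x‖ ^ 2) ^ ((1 : ℝ) / 4) *
              (∫ x in cube n a l,
                Real.sqrt (∑ i, ‖fderiv ℝ h x (Pi.single i 1)‖ ^ 2) ^ 2) ^ ((1 : ℝ) / 4) := by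
  obtain ⟨m, rfl⟩ : ∃ m, n = m + 1 := ⟨n - 1, (Nat.succ_pred_eq_of_pos hn).symm⟩
  refine ⟨Real.sqrt (12 * (m + 1)), Real.sqrt_pos.2 (by positivity), ?_⟩
  intro a l hl h hh
  have hQm : MeasurableSet (cube (m+1) a l) := cube_measurableSet _ _ _
  have hQc : IsCompact (cube (m+1) a l) := cube_isCompact _ _ _
  set P : ℝ := ∫ x in cube (m+1) a l, ‖h x‖ ^ 2 with hPdef
  set G : ℝ := ∫ x in cube (m+1) a l,
    Real.sqrt (∑ i, ‖fderiv ℝ h x (Pi.single i 1)‖ ^ 2) ^ 2 with hGdef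
  have hG' : G = ∫ x in cube (m+1) a l, ∑ i, ‖fderiv ℝ h x (Pi.single i 1)‖ ^ 2 := by
    rw [hGdef]
    exact setIntegral_congr_fun hQm fun x _ => Real.sq_sqrt (by positivity)
  have hP0 : 0 ≤ P := setIntegral_nonneg hQm fun x _ => by positivity
  have hG0 : 0 ≤ G := by
    rw [hG']; exact setIntegral_nonneg hQm fun x _ => by positivity
  have hFc : ∀ j : Fin (m+1), Continuous fun x => fderiv ℝ h x (Pi.single j 1) := by
    intro j
    have h1 : Continuous fun p : (Fin (m+1) → ℝ) × (Fin (m+1) → ℝ) => fderiv ℝ h p.1 p.2 :=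
      hh.continuous_fderiv_apply one_ne_zero
    exact h1.comp (continuous_id.prodMk continuous_const)
  have hGi_le : ∀ i : Fin (m+1),
      (∫ x in cube (m+1) a l, ‖fderiv ℝ h x (Pi.single i 1)‖ ^ 2) ≤ G := by
    intro i
    rw [hG']
    refine setIntegral_mono_on (((hFc i).norm.pow 2).continuousOn.integrableOn_compact hQc)
      ?_ hQm fun x _ => ?_
    · exact integrable_finset_sum Finset.univ fun j _ =>
        ((hFc j).norm.pow 2).continuousOn.integrableOn_compact hQc
    · exact Finset.single_le_sum (f := fun j => ‖fderiv ℝ h x (Pi.single j 1)‖ ^ 2)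
        (fun j _ => by positivity) (Finset.mem_univ i)
  have keyi : ∀ i : Fin (m+1),
      ‖∫ x in cube (m+1) a l, fderiv ℝ h x (Pi.single i 1)‖ ^ 2 ≤
        12 * l ^ m * Real.sqrt P * Real.sqrt G := by
    intro i
    refine (key m a hl h hh i).trans ?_
    rw [← hPdef]
    refine mul_le_mul_of_nonneg_left (Real.sqrt_le_sqrt (hGi_le i)) ?_
    positivity
  have hsum : (∑ i, ‖∫ x in cube (m+1) a l, fderiv ℝ h x (Pi.single i 1)‖ ^ 2) ≤
      (m + 1 : ℝ) * (12 * l ^ m * Real.sqrt P * Real.sqrt G) := by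
    calc (∑ i, ‖∫ x in cube (m+1) a l, fderiv ℝ h x (Pi.single i 1)‖ ^ 2)
        ≤ ∑ _i : Fin (m+1), 12 * l ^ m * Real.sqrt P * Real.sqrt G :=
          Finset.sum_le_sum fun i _ => keyi i
      _ = (m + 1 : ℝ) * (12 * l ^ m * Real.sqrt P * Real.sqrt G) := by
          rw [Finset.sum_const, Finset.card_univ, Fintype.card_fin, nsmul_eq_mul]
          push_cast; ring
  -- rewrite the right-hand side
  set R : ℝ := Real.sqrt (12 * (m + 1)) * l ^ ((((m + 1 : ℕ) : ℝ) - 1) / 2) *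
    P ^ ((1:ℝ)/4) * G ^ ((1:ℝ)/4) with hRdef
  have hR0 : 0 ≤ R := by
    have h1 : (0:ℝ) ≤ Real.sqrt (12 * (m + 1)) := Real.sqrt_nonneg _
    have h2 : (0:ℝ) ≤ l ^ ((((m + 1 : ℕ) : ℝ) - 1) / 2) := Real.rpow_nonneg hl.le _
    have h3 : (0:ℝ) ≤ P ^ ((1:ℝ)/4) := Real.rpow_nonneg hP0 _
    have h4 : (0:ℝ) ≤ G ^ ((1:ℝ)/4) := Real.rpow_nonneg hG0 _
    rw [hRdef]; positivity
  have hRsq : R ^ 2 = (12 * (m + 1)) * l ^ m * Real.sqrt P * Real.sqrt G := by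
    rw [hRdef]
    have e1 : Real.sqrt (12 * (m + 1)) ^ 2 = 12 * (m + 1) := Real.sq_sqrt (by positivity)
    have e2 : (l ^ ((((m + 1 : ℕ) : ℝ) - 1) / 2)) ^ 2 = l ^ m := by
      rw [← Real.rpow_natCast (l ^ ((((m + 1 : ℕ) : ℝ) - 1) / 2)) 2, ← Real.rpow_mul hl.le]
      have : (((m + 1 : ℕ) : ℝ) - 1) / 2 * (2:ℕ) = (m : ℝ) := by push_cast; ring
      rw [this, Real.rpow_natCast]
    have e3 : (P ^ ((1:ℝ)/4)) ^ 2 = Real.sqrt P := by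
      rw [← Real.rpow_natCast (P ^ ((1:ℝ)/4)) 2, ← Real.rpow_mul hP0, Real.sqrt_eq_rpow]
      norm_num
    have e4 : (G ^ ((1:ℝ)/4)) ^ 2 = Real.sqrt G := by
      rw [← Real.rpow_natCast (G ^ ((1:ℝ)/4)) 2, ← Real.rpow_mul hG0, Real.sqrt_eq_rpow]
      norm_num
    calc (Real.sqrt (12 * (m + 1)) * l ^ ((((m + 1 : ℕ) : ℝ) - 1) / 2) *
        P ^ ((1:ℝ)/4) * G ^ ((1:ℝ)/4)) ^ 2
        = Real.sqrt (12 * (m + 1)) ^ 2 * (l ^ ((((m + 1 : ℕ) : ℝ) - 1) / 2)) ^ 2 *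
          (P ^ ((1:ℝ)/4)) ^ 2 * (G ^ ((1:ℝ)/4)) ^ 2 := by ring
      _ = (12 * (m + 1)) * l ^ m * Real.sqrt P * Real.sqrt G := by rw [e1, e2, e3, e4]
  have hfinal : (∑ i, ‖∫ x in cube (m+1) a l, fderiv ℝ h x (Pi.single i 1)‖ ^ 2) ≤ R ^ 2 := by
    rw [hRsq]
    calc (∑ i, ‖∫ x in cube (m+1) a l, fderiv ℝ h x (Pi.single i 1)‖ ^ 2)
        ≤ (m + 1 : ℝ) * (12 * l ^ m * Real.sqrt P * Real.sqrt G) := hsum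
      _ = (12 * (m + 1)) * l ^ m * Real.sqrt P * Real.sqrt G := by ring
  calc Real.sqrt (∑ i, ‖∫ x in cube (m+1) a l, fderiv ℝ h x (Pi.single i 1)‖ ^ 2)
      ≤ Real.sqrt (R ^ 2) := Real.sqrt_le_sqrt hfinal
    _ = R := Real.sqrt_sq hR0
    _ = Real.sqrt (12 * (m + 1)) * l ^ ((((m + 1 : ℕ) : ℝ) - 1) / 2) *
        P ^ ((1:ℝ)/4) * G ^ ((1:ℝ)/4) := hRdef
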